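/- Let δ ≥ 3, let M satisfy ⌊δ/2⌋ ≤ M and M + 1 ≤ ⌊(C₀−δ−1)/2⌋ where C₀ > 2δ+3 is even (the bipartite magic condition). Then M is characterized by: for all even b with 2 ≤ b ≤ δ, the triangles (M, M, b) and (M+1, M+1, b) are metric with perimeter < C₀, and for all odd b with 1 ≤ b ≤ δ, the triangle (M, M+1, b) is metric with perimeter < C₀. -/
import Mathlib


/-- `(x,y,z)` satisfies all three triangle inequalities. -/
def TriMetric (x y z : ℕ) : Prop := x ≤ y + z ∧ y ≤ x + z ∧ z ≤ x + y

/-- Characterization of bipartite magic distances for `A^δ_{∞,0,C₀,2δ+1}`: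
`⌊δ/2⌋ ≤ M` and `M + 1 ≤ ⌊(C₀−δ−1)/2⌋` iff for all even `2 ≤ b ≤ δ` the triangles
`(M,M,b)` and `(M+1,M+1,b)` are metric with perimeter `< C₀`, and for all odd
`1 ≤ b ≤ δ` the triangle `(M,M+1,b)` is metric with perimeter `< C₀`. -/
theorem stmt10 (δ C₀ M : ℕ) (hδ : 3 ≤ δ) (hC₀e : Even C₀) (hC₀ : 2 * δ + 3 < C₀)
    (hM1 : 1 ≤ M) :
    (δ / 2 ≤ M ∧ M + 1 ≤ (C₀ - δ - 1) / 2) ↔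
      ((∀ b, 2 ≤ b → b ≤ δ → Even b →
          (TriMetric M M b ∧ M + M + b < C₀) ∧
          (TriMetric (M + 1) (M + 1) b ∧ (M + 1) + (M + 1) + b < C₀)) ∧
       (∀ b, 1 ≤ b → b ≤ δ → Odd b →
          TriMetric M (M + 1) b ∧ M + (M + 1) + b < C₀)) := by
  obtain ⟨c, hc⟩ := hC₀e
  constructor
  · rintro ⟨h1, h2⟩
    refine ⟨fun b hb1 hb2 hbe => ?_, fun b hb1 hb2 hbo => ?_⟩
    · obtain ⟨k, hk⟩ := hbe
      exact ⟨⟨⟨by omega, by omega, by omega⟩, by omega⟩,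
        ⟨⟨by omega, by omega, by omega⟩, by omega⟩⟩
    · obtain ⟨k, hk⟩ := hbo
      exact ⟨⟨by omega, by omega, by omega⟩, by omega⟩
  · rintro ⟨h1, h2⟩
    rcases Nat.even_or_odd δ with he | ho
    · obtain ⟨⟨⟨_, _, t1⟩, _⟩, ⟨_, p2⟩⟩ := h1 δ (by omega) le_rfl he
      obtain ⟨k, hk⟩ := he
      omega
    · obtain ⟨⟨_, _, t1⟩, p1⟩ := h2 δ (by omega) le_rfl ho
      obtain ⟨k, hk⟩ := ho
      omega
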